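/- Let s : ℕ₀ → ℕ be a sphere function with s₀ = 1, let b be the associated anti-tree over (X, m) with counting measure m ≡ 1 and intrinsic degree path metric ρ, and let b̃ over (ℕ₀, m̃) be the associated one-dimensional graph with intrinsic degree path metric ρ̃. Then for all x, y ∈ X with |x| ≠ |y| or x = y, ρ(x,y) = ρ̃(|x|, |y|). -/

import Mathlib

open scoped BigOperators

/-- Vertex set of the anti-tree with sphere function `s`:
the `k`-th sphere has `s k` elements. -/
def AntiTree (s : ℕ → ℕ) : Type := Σ k : ℕ, Fin (s k)

namespace AntiTree

/-- Standard edge weights of the anti-tree: consecutive spheres are completely connected,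
and there are no other edges. -/
def wt (s : ℕ → ℕ) (x y : AntiTree s) : ℝ :=
  if x.1 + 1 = y.1 ∨ y.1 + 1 = x.1 then 1 else 0

/-- Weighted vertex degree with respect to the counting measure `m ≡ 1`. -/
noncomputable def Deg (s : ℕ → ℕ) (x : AntiTree s) : ℝ := ∑' y : AntiTree s, wt s x y

end AntiTree

/-- Intrinsic degree path (pseudo-)metric of a weighted graph `b` whose weighted degree
function is `D`:  `ρ(x,y)` is the infimum over finite paths from `x` to `y` of
`∑_j min(1/D(x_j), 1/D(x_{j+1}))^{1/2}`. -/
noncomputable def pathMetric {X : Type*} (b : X → X → ℝ) (D : X → ℝ) (x y : X) : ℝ :=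
  sInf { L : ℝ | ∃ (k : ℕ) (p : ℕ → X), p 0 = x ∧ p k = y ∧
    (∀ j < k, 0 < b (p j) (p (j + 1))) ∧
    L = ∑ j ∈ Finset.range k, Real.sqrt (min (1 / D (p j)) (1 / D (p (j + 1)))) }

/-- The intrinsic degree path metric of the anti-tree. -/
noncomputable def AntiTree.rho (s : ℕ → ℕ) : AntiTree s → AntiTree s → ℝ :=
  pathMetric (AntiTree.wt s) (AntiTree.Deg s)

/-- Closed balls with respect to the intrinsic degree path metric. -/
noncomputable def AntiTree.ball (s : ℕ → ℕ) (x : AntiTree s) (r : ℝ) : Set (AntiTree s) :=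
  {y | AntiTree.rho s x y ≤ r}

/-- The sphere function of the `γ`-anti-tree: `s (k-1) = ⌊k ^ γ⌋` for `k ≥ 1`,
i.e. `s k = ⌊(k+1) ^ γ⌋`. -/
noncomputable def gammaSphere (γ : ℝ) : ℕ → ℕ := fun k => ⌊((k : ℝ) + 1) ^ γ⌋₊
namespace OneDim

/-- Measure of the one-dimensional graph associated with an anti-tree. -/
noncomputable def m (s : ℕ → ℕ) (k : ℕ) : ℝ := (s k : ℝ)

/-- Edge weights of the one-dimensional graph associated with an anti-tree. -/
noncomputable def wt (s : ℕ → ℕ) (k l : ℕ) : ℝ :=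
  if k + 1 = l ∨ l + 1 = k then (s k : ℝ) * (s l : ℝ) else 0

/-- Weighted vertex degree of the one-dimensional graph. -/
noncomputable def Deg (s : ℕ → ℕ) (k : ℕ) : ℝ := (1 / m s k) * ∑' l : ℕ, wt s k l

/-- Intrinsic degree path metric of the one-dimensional graph. -/
noncomputable def rho (s : ℕ → ℕ) : ℕ → ℕ → ℝ := pathMetric (wt s) (Deg s)

/-- Closed balls of the one-dimensional graph. -/
noncomputable def ball (s : ℕ → ℕ) (k : ℕ) (r : ℝ) : Set ℕ := {l | rho s k l ≤ r}

/-- Measure of a subset of the one-dimensional graph. -/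
noncomputable def vol (s : ℕ → ℕ) (A : Set ℕ) : ℝ := ∑' l : ℕ, Set.indicator A (m s) l

end OneDim

/-- The common degree function: `s (n+1) + s (n-1)` (with `s (-1) = 0`). -/
noncomputable def Dfun (s : ℕ → ℕ) (n : ℕ) : ℝ :=
  (s (n+1) : ℝ) + (if n = 0 then 0 else (s (n-1) : ℝ))

lemma sum_adj (c : ℕ → ℝ) (n : ℕ) :
    ∑ k ∈ Finset.range (n+2), (if n+1 = k ∨ k+1 = n then c k else 0)
      = c (n+1) + (if n = 0 then 0 else c (n-1)) := by
  cases n with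
  | zero => simp [Finset.sum_range_succ]
  | succ m =>
    have hsplit : ∀ k, (if m+1+1 = k ∨ k+1 = m+1 then c k else 0)
        = (if k = m+2 then c k else 0) + (if k = m then c k else 0) := by
      intro k
      split_ifs <;> first | (exfalso; omega) | ring
    rw [Finset.sum_congr rfl (fun k _ => hsplit k), Finset.sum_add_distrib,
      Finset.sum_ite_eq' , Finset.sum_ite_eq']
    have h1 : m + 2 ∈ Finset.range (m + 1 + 2) := Finset.mem_range.2 (by omega)
    have h2 : m ∈ Finset.range (m + 1 + 2) := Finset.mem_range.2 (by omega)
    rw [if_pos h1, if_pos h2]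
    simp

lemma AntiTree.Deg_eq (s : ℕ → ℕ) (x : AntiTree s) :
    AntiTree.Deg s x = Dfun s x.1 := by
  classical
  set n := x.1 with hn
  have key : (∑' y : AntiTree s, AntiTree.wt s x y)
      = ∑ z ∈ ((Finset.range (n+2)).sigma fun k => (Finset.univ : Finset (Fin (s k)))),
          AntiTree.wt s x z :=
    tsum_eq_sum (by
      intro y hy
      rw [AntiTree.wt, if_neg]
      intro h
      apply hy
      refine Finset.mem_sigma.2 ?_
      exact ⟨Finset.mem_range.2 (by omega), Finset.mem_univ _⟩)
  rw [AntiTree.Deg, key]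
  refine (Finset.sum_sigma _ _ _).trans ?_
  have hinner : ∀ k ∈ Finset.range (n+2),
      (∑ i : Fin (s k), AntiTree.wt s x ⟨k, i⟩)
        = (if n+1 = k ∨ k+1 = n then (s k : ℝ) else 0) := by
    intro k _
    simp only [AntiTree.wt]
    show (∑ _i : Fin (s k), if x.1 + 1 = k ∨ k + 1 = x.1 then (1:ℝ) else 0) = _
    rw [Finset.sum_const, Finset.card_univ, Fintype.card_fin, hn]
    split_ifs <;> simp
  rw [Finset.sum_congr rfl hinner, sum_adj (fun k => (s k : ℝ)) n]
  rfl

lemma OneDim.Deg_eq (s : ℕ → ℕ) (hs : ∀ k, 0 < s k) (n : ℕ) :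
    OneDim.Deg s n = Dfun s n := by
  classical
  have h1 : ∑' l, OneDim.wt s n l = (s n : ℝ) * Dfun s n := by
    rw [tsum_eq_sum (s := Finset.range (n+2))
      (by
        intro l hl
        rw [OneDim.wt, if_neg]
        intro h
        exact hl (Finset.mem_range.2 (by omega)))]
    simp only [OneDim.wt]
    rw [sum_adj (fun k => (s n : ℝ) * (s k : ℝ)) n, Dfun]
    split_ifs <;> ring
  have hne : (s n : ℝ) ≠ 0 := by exact_mod_cast (hs n).ne'
  rw [OneDim.Deg, OneDim.m, h1, one_div, inv_mul_cancel_left₀ hne]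

/-- **Intrinsic metric of anti-trees.**
For an anti-tree with sphere function `s` (with `s₀ = 1`), counting measure `m ≡ 1` and
intrinsic degree path metric `ρ`, and the associated one-dimensional graph over `(ℕ₀, m̃)`
with intrinsic degree path metric `ρ̃`, we have `ρ(x,y) = ρ̃(|x|,|y|)` for all vertices
`x, y` with `|x| ≠ |y|` or `x = y`. -/
theorem antiTree_rho_eq_oneDim_rho (s : ℕ → ℕ) (hs : ∀ k, 0 < s k) (hs0 : s 0 = 1)
    (x y : AntiTree s) (hxy : x.1 ≠ y.1 ∨ x = y) :
    AntiTree.rho s x y = OneDim.rho s x.1 y.1 := by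
  classical
  unfold AntiTree.rho OneDim.rho pathMetric
  congr 1
  ext L
  simp only [Set.mem_setOf_eq]
  constructor
  · rintro ⟨k, p, hp0, hpk, hadj, hL⟩
    refine ⟨k, fun j => (p j).1, congrArg Sigma.fst hp0, congrArg Sigma.fst hpk, ?_, ?_⟩
    · intro j hj
      have h := hadj j hj
      have hc : (p j).1 + 1 = (p (j+1)).1 ∨ (p (j+1)).1 + 1 = (p j).1 := by
        by_contra hc
        rw [AntiTree.wt, if_neg hc] at h
        exact lt_irrefl 0 h
      show 0 < OneDim.wt s (p j).1 (p (j+1)).1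
      rw [OneDim.wt, if_pos hc]
      have h1 : (0:ℝ) < (s ((p j).1) : ℝ) := by exact_mod_cast hs _
      have h2 : (0:ℝ) < (s ((p (j+1)).1) : ℝ) := by exact_mod_cast hs _
      exact mul_pos h1 h2
    · rw [hL]
      refine Finset.sum_congr rfl fun j _ => ?_
      simp only [AntiTree.Deg_eq, OneDim.Deg_eq s hs]
  · rintro ⟨k, q, hq0, hqk, hadj, hL⟩
    rcases Nat.eq_zero_or_pos k with rfl | hk
    · have hxy' : x = y := by
        rcases hxy with h | h
        · exact absurd (hq0 ▸ hqk ▸ rfl) h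
        · exact h
      exact ⟨0, fun _ => x, rfl, hxy'.symm ▸ rfl, by omega, by simpa using hL⟩
    · have hk0 : k ≠ 0 := hk.ne'
      set p : ℕ → AntiTree s :=
        fun i => if i = 0 then x else if i = k then y else ⟨q i, ⟨0, hs (q i)⟩⟩ with hp
      have hlev : ∀ i ≤ k, (p i).1 = q i := by
        intro i hi
        rcases eq_or_ne i 0 with rfl | hi0
        · simp [p, hq0]
        · rcases eq_or_ne i k with rfl | hik
          · simp [p, hi0, hqk]
          · simp [p, hi0, hik]
      refine ⟨k, p, by simp [p], by simp [p, hk0], ?_, ?_⟩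
      · intro j hj
        have h := hadj j hj
        have hc : q j + 1 = q (j+1) ∨ q (j+1) + 1 = q j := by
          by_contra hc
          rw [OneDim.wt, if_neg hc] at h
          exact lt_irrefl 0 h
        have e1 : (p j).1 = q j := hlev j (le_of_lt hj)
        have e2 : (p (j+1)).1 = q (j+1) := hlev (j+1) hj
        show (0:ℝ) < AntiTree.wt s (p j) (p (j+1))
        rw [AntiTree.wt, if_pos (by rw [e1, e2]; exact hc)]
        norm_num
      · rw [hL]
        refine Finset.sum_congr rfl fun j hj => ?_
        have hj' := Finset.mem_range.1 hj
        simp only [AntiTree.Deg_eq, OneDim.Deg_eq s hs, hlev j (le_of_lt hj'),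
          hlev (j+1) hj']
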